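/- Composition of linear kernels (the computation underlying the coefficient C₁ of the Berezin-Toeplitz product, cf. (4.48)/(7.1.11)): let a, b, c, d ∈ ℂ^n and define the linear polynomials h(Z,Z′) = Σ_{i=1}^n (a_i z_i + b_i·conj(z′_i)) and h′(Z,Z′) = Σ_{i=1}^n (c_i z_i + d_i·conj(z′_i)) on ℝ^{2n} × ℝ^{2n}. Then ∫_{ℝ^{2n}} h(0,Y) 𝓟(0,Y) h′(Y,0) 𝓟(Y,0) dY = (1/π) Σ_{i=1}^n b_i c_i; that is, the kernel-calculus value 𝒦[h,h′](0,0) equals (1/π) Σ_i b_i c_i. -/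

import Mathlib

open MeasureTheory Complex MvPolynomial

noncomputable section

/-- The Wirtinger derivative `∂/∂z_i` on `ℂⁿ ≅ ℝ^{2n}`, defined via real Fréchet
derivatives in the directions corresponding to the real coordinates
`Z_{2i-1}, Z_{2i}` (so that `z_i = Z_{2i-1} + √-1 Z_{2i}`). -/
def wirtingerZ (n : ℕ) (i : Fin n) (f : (Fin n → ℂ) → ℂ) (Z : Fin n → ℂ) : ℂ :=
  (1 / 2 : ℂ) * (fderiv ℝ f Z (Pi.single i 1) - Complex.I * fderiv ℝ f Z (Pi.single i Complex.I))

/-- The Wirtinger derivative `∂/∂z̄_i`. -/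
def wirtingerZBar (n : ℕ) (i : Fin n) (f : (Fin n → ℂ) → ℂ) (Z : Fin n → ℂ) : ℂ :=
  (1 / 2 : ℂ) * (fderiv ℝ f Z (Pi.single i 1) + Complex.I * fderiv ℝ f Z (Pi.single i Complex.I))

/-- The annihilation-type operator `b_i f = -2 ∂f/∂z_i + π z̄_i f`. -/
def bOp (n : ℕ) (i : Fin n) (f : (Fin n → ℂ) → ℂ) : (Fin n → ℂ) → ℂ :=
  fun Z => -2 * wirtingerZ n i f Z + (Real.pi : ℂ) * (starRingEnd ℂ) (Z i) * f Z

/-- The creation-type operator `b_i⁺ f = 2 ∂f/∂z̄_i + π z_i f`. -/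
def bPlusOp (n : ℕ) (i : Fin n) (f : (Fin n → ℂ) → ℂ) : (Fin n → ℂ) → ℂ :=
  fun Z => 2 * wirtingerZBar n i f Z + (Real.pi : ℂ) * Z i * f Z

/-- The model operator `𝓛 f = Σ_i b_i (b_i⁺ f)`. -/
def modelL (n : ℕ) (f : (Fin n → ℂ) → ℂ) : (Fin n → ℂ) → ℂ :=
  fun Z => ∑ i : Fin n, bOp n i (bPlusOp n i f) Z

/-- `b^α = b_1^{α_1} ∘ ⋯ ∘ b_n^{α_n}`. -/
def bPow (n : ℕ) (α : Fin n → ℕ) : ((Fin n → ℂ) → ℂ) → ((Fin n → ℂ) → ℂ) :=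
  (List.finRange n).foldr (fun i T => (bOp n i)^[α i] ∘ T) id

/-- The Gaussian `e^{-π|z|²/2}`. -/
def modelGauss (n : ℕ) (Z : Fin n → ℂ) : ℂ :=
  Complex.exp (-((Real.pi : ℂ) / 2) * ∑ i : Fin n, (Complex.normSq (Z i) : ℂ))

/-- The model Bergman kernel
`𝓟(Z,Z') = exp(-(π/2) Σ_i (|z_i|² + |z'_i|² - 2 z_i z̄'_i))`. -/
def modelP (n : ℕ) (Z Z' : Fin n → ℂ) : ℂ :=
  Complex.exp (-((Real.pi : ℂ) / 2) *
    ∑ i : Fin n, ((Complex.normSq (Z i) : ℂ) + (Complex.normSq (Z' i) : ℂ)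
      - 2 * Z i * (starRingEnd ℂ) (Z' i)))

/-- The eigenfunctions `E_{α,β} = b^α (z^β e^{-π|z|²/2})`. -/
def eigFun (n : ℕ) (α β : Fin n → ℕ) : (Fin n → ℂ) → ℂ :=
  bPow n α (fun Z => (∏ i : Fin n, Z i ^ β i) * modelGauss n Z)


namespace KernelAux

open Real Set Filter Topology

noncomputable def g0 (x : ℝ) : ℝ := Real.exp (-π * x ^ 2)
noncomputable def g1 (x : ℝ) : ℝ := x * g0 x
noncomputable def g2 (x : ℝ) : ℝ := x ^ 2 * g0 x

lemma int_g0 : Integrable g0 := integrable_exp_neg_mul_sq pi_pos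
lemma int_g1 : Integrable g1 := integrable_mul_exp_neg_mul_sq pi_pos
lemma int_g2 : Integrable g2 := by
  have h := integrable_rpow_mul_exp_neg_mul_sq pi_pos (s := 2) (by norm_num)
  have hg : g2 = fun x => x ^ (2:ℝ) * Real.exp (-π * x ^ 2) := by
    funext x; simp [g2, g0, Real.rpow_two]
  rw [hg]; exact h

lemma I_g0 : ∫ x, g0 x = 1 := by
  simp only [g0]
  rw [integral_gaussian, div_self pi_pos.ne', Real.sqrt_one]

lemma I_g1 : ∫ x, g1 x = 0 := by
  have h := integral_neg_eq_self g1 (volume : Measure ℝ)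
  have h2 : ∀ x : ℝ, g1 (-x) = - g1 x := by
    intro x; simp [g1, g0, neg_sq]
  rw [funext h2, integral_neg] at h
  linarith

lemma I_g0_Ioi : ∫ x in Ioi (0:ℝ), g0 x = 1 / 2 := by
  simp only [g0]
  rw [integral_gaussian_Ioi, div_self pi_pos.ne', Real.sqrt_one]

lemma g1_tendsto : Tendsto g1 atTop (𝓝 0) := by
  have h := (rpow_mul_exp_neg_mul_sq_isLittleO_exp_neg pi_pos 1).tendsto_zero_of_tendsto
    (tendsto_exp_atBot.comp <| tendsto_id.const_mul_atTop_of_neg (neg_lt_zero.mpr one_half_pos))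
  have hg : g1 = fun x => x ^ (1:ℝ) * Real.exp (-π * x ^ 2) := by
    funext x; simp [g1, g0, Real.rpow_one]
  rw [hg]; exact h

lemma I_g2_Ioi : ∫ x in Ioi (0:ℝ), g2 x = 1 / (4 * π) := by
  have hder : ∀ x ∈ Ici (0:ℝ), HasDerivAt (fun x => -(1/(2*π)) * g1 x)
      (g2 x - (1/(2*π)) * g0 x) x := by
    intro x _
    have h1 : HasDerivAt (fun x : ℝ => -π * x ^ 2) (-π * (2 * x)) x := by
      simpa using (hasDerivAt_pow 2 x).const_mul (-π)
    have h2 : HasDerivAt g0 (Real.exp (-π * x ^ 2) * (-π * (2 * x))) x := h1.exp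
    have h3 : HasDerivAt g1 (1 * g0 x + x * (Real.exp (-π * x ^ 2) * (-π * (2 * x)))) x :=
      (hasDerivAt_id x).mul h2
    have h4 := h3.const_mul (-(1/(2*π)))
    refine h4.congr_deriv ?_
    simp only [g2, g1, g0]
    field_simp
    ring
  have hint : IntegrableOn (fun x => g2 x - (1/(2*π)) * g0 x) (Ioi 0) :=
    (int_g2.sub (int_g0.const_mul _)).integrableOn
  have htend : Tendsto (fun x => -(1/(2*π)) * g1 x) atTop (𝓝 (-(1/(2*π)) * 0)) :=
    g1_tendsto.const_mul _
  have key := integral_Ioi_of_hasDerivAt_of_tendsto' hder hint htend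
  have h0 : g1 0 = 0 := by simp [g1]
  rw [integral_sub int_g2.integrableOn ((int_g0.const_mul _).integrableOn),
    integral_const_mul, I_g0_Ioi] at key
  rw [h0] at key
  simp only [mul_zero, mul_one] at key
  have : (∫ x in Ioi (0:ℝ), g2 x) = 1/(2*π) * (1/2) := by linarith
  rw [this]; ring

lemma I_g2 : ∫ x, g2 x = 1 / (2 * π) := by
  have heven : ∀ x : ℝ, g2 (-x) = g2 x := by intro x; simp [g2, g0, neg_sq]
  have h1 : ∫ x in Iic (0:ℝ), g2 x = ∫ x in Ioi (0:ℝ), g2 x := by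
    have h := integral_comp_neg_Ioi (0:ℝ) g2
    simp only [heven, neg_zero] at h
    exact h.symm
  rw [← intervalIntegral.integral_Iic_add_Ioi int_g2.integrableOn int_g2.integrableOn, h1, I_g2_Ioi]
  field_simp; ring

end KernelAux

namespace KernelAux

open Real Set Filter Topology

noncomputable def cG (z : ℂ) : ℂ := Complex.exp (-(π:ℂ) * (Complex.normSq z : ℂ))

lemma cG_apply (x y : ℝ) : cG ((x:ℂ) + (y:ℂ) * Complex.I) = ((g0 x * g0 y : ℝ) : ℂ) := by
  simp only [cG, Complex.normSq_add_mul_I, g0, ← Real.exp_add, Complex.ofReal_exp]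
  congr 1
  push_cast
  ring

lemma integral_c (g : ℂ → ℂ) :
    (∫ z : ℂ, g z) = ∫ p : ℝ × ℝ, g ((p.1:ℂ) + (p.2:ℂ) * Complex.I) := by
  rw [← (Complex.volume_preserving_equiv_real_prod.symm).integral_comp
      Complex.measurableEquivRealProd.symm.measurableEmbedding g]
  congr 1
  funext p
  rw [Complex.measurableEquivRealProd_symm_apply, Complex.mk_eq_add_mul_I]

lemma integrable_c_iff (g : ℂ → ℂ) :
    Integrable g ↔ Integrable (fun p : ℝ × ℝ => g ((p.1:ℂ) + (p.2:ℂ) * Complex.I)) := by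
  rw [← (Complex.volume_preserving_equiv_real_prod.symm).integrable_comp_emb
      Complex.measurableEquivRealProd.symm.measurableEmbedding (g := g)]
  constructor <;> intro h <;> refine h.congr ?_ <;> filter_upwards with p <;>
    simp [Complex.measurableEquivRealProd_symm_apply, Complex.mk_eq_add_mul_I, Function.comp]


lemma conj_add_mul_I (x y : ℝ) :
    (starRingEnd ℂ) ((x:ℂ) + (y:ℂ) * Complex.I) = (x:ℂ) + (y:ℂ) * (-Complex.I) := by
  simp [Complex.ext_iff]

lemma int_cg0 : Integrable (fun x : ℝ => ((g0 x : ℂ))) := int_g0.ofReal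
lemma int_cg1 : Integrable (fun x : ℝ => ((g1 x : ℂ))) := int_g1.ofReal
lemma int_cg2 : Integrable (fun x : ℝ => ((g2 x : ℂ))) := int_g2.ofReal

lemma Icg0 : (∫ x : ℝ, ((g0 x : ℂ))) = 1 := by
  have h : (∫ x : ℝ, ((g0 x : ℂ))) = ((∫ x, g0 x : ℝ) : ℂ) := integral_ofReal
  rw [h, I_g0]; norm_num

lemma Icg1 : (∫ x : ℝ, ((g1 x : ℂ))) = 0 := by
  have h : (∫ x : ℝ, ((g1 x : ℂ))) = ((∫ x, g1 x : ℝ) : ℂ) := integral_ofReal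
  rw [h, I_g1]; norm_num

lemma Icg2 : (∫ x : ℝ, ((g2 x : ℂ))) = ((1 / (2 * π) : ℝ) : ℂ) := by
  have h : (∫ x : ℝ, ((g2 x : ℂ))) = ((∫ x, g2 x : ℝ) : ℂ) := integral_ofReal
  rw [h, I_g2]


lemma ci0 : Integrable cG := by
  rw [integrable_c_iff]
  have h : (fun p : ℝ × ℝ => cG ((p.1:ℂ) + (p.2:ℂ) * Complex.I))
      = fun p : ℝ × ℝ => ((g0 p.1 : ℂ)) * ((g0 p.2 : ℂ)) := by
    funext p; rw [cG_apply]; push_cast; ring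
  rw [h, Measure.volume_eq_prod]
  exact int_cg0.mul_prod int_cg0

lemma cv0 : ∫ z : ℂ, cG z = 1 := by
  rw [integral_c]
  have h : (fun p : ℝ × ℝ => cG ((p.1:ℂ) + (p.2:ℂ) * Complex.I))
      = fun p : ℝ × ℝ => ((g0 p.1 : ℂ)) * ((g0 p.2 : ℂ)) := by
    funext p; rw [cG_apply]; push_cast; ring
  rw [h, Measure.volume_eq_prod,
    integral_prod_mul (fun x : ℝ => ((g0 x : ℂ))) (fun y : ℝ => ((g0 y : ℂ))),
    Icg0]
  norm_num

lemma ci1 : Integrable (fun z : ℂ => (starRingEnd ℂ) z * cG z) := by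
  rw [integrable_c_iff]
  have h : (fun p : ℝ × ℝ => (starRingEnd ℂ) ((p.1:ℂ) + (p.2:ℂ) * Complex.I) *
        cG ((p.1:ℂ) + (p.2:ℂ) * Complex.I))
      = fun p : ℝ × ℝ => ((g1 p.1 : ℂ)) * ((g0 p.2 : ℂ))
          + ((g0 p.1 : ℂ)) * (-Complex.I * ((g1 p.2 : ℂ))) := by
    funext p; rw [cG_apply, conj_add_mul_I]; simp only [g1]; push_cast; ring
  rw [h, Measure.volume_eq_prod]
  exact (int_cg1.mul_prod int_cg0).add
    (int_cg0.mul_prod (int_cg1.const_mul (-Complex.I)))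

lemma cv1 : ∫ z : ℂ, (starRingEnd ℂ) z * cG z = 0 := by
  rw [integral_c]
  have h : (fun p : ℝ × ℝ => (starRingEnd ℂ) ((p.1:ℂ) + (p.2:ℂ) * Complex.I) *
        cG ((p.1:ℂ) + (p.2:ℂ) * Complex.I))
      = fun p : ℝ × ℝ => ((g1 p.1 : ℂ)) * ((g0 p.2 : ℂ))
          + ((g0 p.1 : ℂ)) * (-Complex.I * ((g1 p.2 : ℂ))) := by
    funext p; rw [cG_apply, conj_add_mul_I]; simp only [g1]; push_cast; ring
  rw [h, Measure.volume_eq_prod, integral_add (int_cg1.mul_prod int_cg0)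
    (int_cg0.mul_prod (int_cg1.const_mul (-Complex.I))),
    integral_prod_mul (fun x : ℝ => ((g1 x : ℂ))) (fun y : ℝ => ((g0 y : ℂ))),
    integral_prod_mul (fun x : ℝ => ((g0 x : ℂ))) (fun y : ℝ => -Complex.I * ((g1 y : ℂ))),
    integral_const_mul, Icg1]
  norm_num

lemma ci1' : Integrable (fun z : ℂ => z * cG z) := by
  rw [integrable_c_iff]
  have h : (fun p : ℝ × ℝ => ((p.1:ℂ) + (p.2:ℂ) * Complex.I) *
        cG ((p.1:ℂ) + (p.2:ℂ) * Complex.I))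
      = fun p : ℝ × ℝ => ((g1 p.1 : ℂ)) * ((g0 p.2 : ℂ))
          + ((g0 p.1 : ℂ)) * (Complex.I * ((g1 p.2 : ℂ))) := by
    funext p; rw [cG_apply]; simp only [g1]; push_cast; ring
  rw [h, Measure.volume_eq_prod]
  exact (int_cg1.mul_prod int_cg0).add
    (int_cg0.mul_prod (int_cg1.const_mul Complex.I))

lemma cv1' : ∫ z : ℂ, z * cG z = 0 := by
  rw [integral_c]
  have h : (fun p : ℝ × ℝ => ((p.1:ℂ) + (p.2:ℂ) * Complex.I) *
        cG ((p.1:ℂ) + (p.2:ℂ) * Complex.I))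
      = fun p : ℝ × ℝ => ((g1 p.1 : ℂ)) * ((g0 p.2 : ℂ))
          + ((g0 p.1 : ℂ)) * (Complex.I * ((g1 p.2 : ℂ))) := by
    funext p; rw [cG_apply]; simp only [g1]; push_cast; ring
  rw [h, Measure.volume_eq_prod, integral_add (int_cg1.mul_prod int_cg0)
    (int_cg0.mul_prod (int_cg1.const_mul Complex.I)),
    integral_prod_mul (fun x : ℝ => ((g1 x : ℂ))) (fun y : ℝ => ((g0 y : ℂ))),
    integral_prod_mul (fun x : ℝ => ((g0 x : ℂ))) (fun y : ℝ => Complex.I * ((g1 y : ℂ))),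
    integral_const_mul, Icg1]
  norm_num

lemma ci2 : Integrable (fun z : ℂ => (starRingEnd ℂ) z * z * cG z) := by
  rw [integrable_c_iff]
  have h : (fun p : ℝ × ℝ => (starRingEnd ℂ) ((p.1:ℂ) + (p.2:ℂ) * Complex.I) *
        ((p.1:ℂ) + (p.2:ℂ) * Complex.I) * cG ((p.1:ℂ) + (p.2:ℂ) * Complex.I))
      = fun p : ℝ × ℝ => ((g2 p.1 : ℂ)) * ((g0 p.2 : ℂ))
          + ((g0 p.1 : ℂ)) * ((g2 p.2 : ℂ)) := by
    funext p; rw [cG_apply, conj_add_mul_I]; simp only [g2]; push_cast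
    linear_combination (-(p.2:ℂ)^2 * ((g0 p.1 : ℂ)) * ((g0 p.2 : ℂ))) * Complex.I_sq
  rw [h, Measure.volume_eq_prod]
  exact (int_cg2.mul_prod int_cg0).add
    (int_cg0.mul_prod int_cg2)

lemma cv2 : ∫ z : ℂ, (starRingEnd ℂ) z * z * cG z = 1 / (π : ℂ) := by
  rw [integral_c]
  have h : (fun p : ℝ × ℝ => (starRingEnd ℂ) ((p.1:ℂ) + (p.2:ℂ) * Complex.I) *
        ((p.1:ℂ) + (p.2:ℂ) * Complex.I) * cG ((p.1:ℂ) + (p.2:ℂ) * Complex.I))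
      = fun p : ℝ × ℝ => ((g2 p.1 : ℂ)) * ((g0 p.2 : ℂ))
          + ((g0 p.1 : ℂ)) * ((g2 p.2 : ℂ)) := by
    funext p; rw [cG_apply, conj_add_mul_I]; simp only [g2]; push_cast
    linear_combination (-(p.2:ℂ)^2 * ((g0 p.1 : ℂ)) * ((g0 p.2 : ℂ))) * Complex.I_sq
  rw [h, Measure.volume_eq_prod, integral_add (int_cg2.mul_prod int_cg0)
    (int_cg0.mul_prod int_cg2),
    integral_prod_mul (fun x : ℝ => ((g2 x : ℂ))) (fun y : ℝ => ((g0 y : ℂ))),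
    integral_prod_mul (fun x : ℝ => ((g0 x : ℂ))) (fun y : ℝ => ((g2 y : ℂ))),
    Icg0, Icg2]
  have hpi : (π : ℂ) ≠ 0 := Complex.ofReal_ne_zero.mpr pi_ne_zero
  push_cast
  field_simp
  norm_num


noncomputable def fac (n : ℕ) (i j k : Fin n) (y : ℂ) : ℂ :=
  (if k = i then (starRingEnd ℂ) y else 1) * (if k = j then y else 1) * cG y

lemma fac_eq_diag (n : ℕ) (i k : Fin n) (hk : k = i) :
    fac n i i k = fun y => (starRingEnd ℂ) y * y * cG y := by
  funext y; simp [fac, hk]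

lemma fac_eq_conj (n : ℕ) (i j k : Fin n) (hi : k = i) (hj : k ≠ j) :
    fac n i j k = fun y => (starRingEnd ℂ) y * cG y := by
  subst hi; funext y; simp [fac, hj]

lemma fac_eq_id (n : ℕ) (i j k : Fin n) (hi : k ≠ i) (hj : k = j) :
    fac n i j k = fun y => y * cG y := by
  subst hj; funext y; simp [fac, hi]

lemma fac_eq_one (n : ℕ) (i j k : Fin n) (hi : k ≠ i) (hj : k ≠ j) :
    fac n i j k = fun y => cG y := by
  funext y; simp [fac, hi, hj]

lemma int_fac (n : ℕ) (i j k : Fin n) : Integrable (fac n i j k) := by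
  rcases eq_or_ne k i with hi | hi <;> rcases eq_or_ne k j with hj | hj
  · have hij : i = j := hi.symm.trans hj
    subst hij
    rw [fac_eq_diag n i k hi]; exact ci2
  · rw [fac_eq_conj n i j k hi hj]; exact ci1
  · rw [fac_eq_id n i j k hi hj]; exact ci1'
  · rw [fac_eq_one n i j k hi hj]; exact ci0

lemma Ifac_diag (n : ℕ) (i k : Fin n) :
    (∫ y : ℂ, fac n i i k y) = if k = i then 1 / (π : ℂ) else 1 := by
  rcases eq_or_ne k i with h | h
  · rw [if_pos h, fac_eq_diag n i k h]
    exact cv2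
  · rw [if_neg h, fac_eq_one n i i k h h]
    exact cv0

lemma Ifac_off (n : ℕ) (i j : Fin n) (hij : i ≠ j) :
    (∫ y : ℂ, fac n i j i y) = 0 := by
  rw [fac_eq_conj n i j i rfl hij]
  exact cv1

lemma prod_int_fac (n : ℕ) (i j : Fin n) :
    (∏ k : Fin n, ∫ y : ℂ, fac n i j k y) = if i = j then 1 / (π : ℂ) else 0 := by
  rcases eq_or_ne i j with h | h
  · subst h
    rw [if_pos rfl]
    rw [Finset.prod_congr rfl (fun k _ => Ifac_diag n i k)]
    rw [Finset.prod_ite_eq' Finset.univ i (fun _ => 1 / (π : ℂ))]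
    simp
  · rw [if_neg h]
    exact Finset.prod_eq_zero (Finset.mem_univ i) (Ifac_off n i j h)

end KernelAux

open KernelAux in
/-- Composition of linear kernels: with
`h(Z,Z') = Σ_i (a_i z_i + b_i z̄'_i)` and `h'(Z,Z') = Σ_i (c_i z_i + d_i z̄'_i)`,
`∫ h(0,Y) 𝓟(0,Y) h'(Y,0) 𝓟(Y,0) dY = (1/π) Σ_i b_i c_i`, i.e.
`𝒦[h,h'](0,0) = (1/π) Σ_i b_i c_i`. -/
theorem kernel_calculus_linear_linear (n : ℕ) (hn : 1 ≤ n) (a b c d : Fin n → ℂ) :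
    (∫ Y : Fin n → ℂ,
      (∑ i : Fin n, (a i * (0 : ℂ) + b i * (starRingEnd ℂ) (Y i))) * modelP n 0 Y *
        ((∑ i : Fin n, (c i * Y i + d i * (starRingEnd ℂ) ((0 : Fin n → ℂ) i))) *
          modelP n Y 0)) =
    (1/(Real.pi : ℂ)) * ∑ i : Fin n, b i * c i := by
  have hpt : ∀ Y : Fin n → ℂ,
      (∑ i : Fin n, (a i * (0 : ℂ) + b i * (starRingEnd ℂ) (Y i))) * modelP n 0 Y *
        ((∑ i : Fin n, (c i * Y i + d i * (starRingEnd ℂ) ((0 : Fin n → ℂ) i))) *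
          modelP n Y 0)
      = ∑ i : Fin n, ∑ j : Fin n, (b i * c j) * ∏ k : Fin n, fac n i j k (Y k) := by
    intro Y
    have hP : modelP n 0 Y * modelP n Y 0 = ∏ k : Fin n, cG (Y k) := by
      have h1 : ∏ k : Fin n, cG (Y k)
          = Complex.exp (∑ k : Fin n, -(Real.pi : ℂ) * (Complex.normSq (Y k) : ℂ)) := by
        rw [Complex.exp_sum]; rfl
      simp only [modelP, Pi.zero_apply, map_zero, Complex.normSq_zero, Complex.ofReal_zero,
        mul_zero, zero_mul, zero_add, add_zero, sub_zero]
      rw [← Complex.exp_add, h1]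
      congr 1
      have hms := Finset.mul_sum (Finset.univ : Finset (Fin n))
        (fun k => (Complex.normSq (Y k) : ℂ)) (-(Real.pi : ℂ))
      linear_combination hms
    have hsum1 : (∑ i : Fin n, (a i * (0:ℂ) + b i * (starRingEnd ℂ) (Y i)))
        = ∑ i : Fin n, b i * (starRingEnd ℂ) (Y i) := by simp
    have hsum2 : (∑ i : Fin n, (c i * Y i + d i * (starRingEnd ℂ) ((0 : Fin n → ℂ) i)))
        = ∑ i : Fin n, c i * Y i := by simp
    rw [hsum1, hsum2]
    have hprod : ∀ i j : Fin n, (∏ k : Fin n, fac n i j k (Y k))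
        = (starRingEnd ℂ) (Y i) * Y j * ∏ k : Fin n, cG (Y k) := by
      intro i j
      simp only [fac]
      rw [Finset.prod_mul_distrib, Finset.prod_mul_distrib,
        Finset.prod_ite_eq' Finset.univ i (fun k => (starRingEnd ℂ) (Y k)),
        Finset.prod_ite_eq' Finset.univ j (fun k => Y k)]
      simp
    calc (∑ i : Fin n, b i * (starRingEnd ℂ) (Y i)) * modelP n 0 Y *
          ((∑ i : Fin n, c i * Y i) * modelP n Y 0)
        = (∑ i : Fin n, b i * (starRingEnd ℂ) (Y i)) * (∑ j : Fin n, c j * Y j) *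
            (modelP n 0 Y * modelP n Y 0) := by ring
      _ = ∑ i : Fin n, ∑ j : Fin n,
            (b i * (starRingEnd ℂ) (Y i)) * (c j * Y j) * ∏ k : Fin n, cG (Y k) := by
          rw [hP, Finset.sum_mul_sum, Finset.sum_mul]
          exact Finset.sum_congr rfl fun i _ => (Finset.sum_mul _ _ _)
      _ = ∑ i : Fin n, ∑ j : Fin n, (b i * c j) * ∏ k : Fin n, fac n i j k (Y k) := by
          refine Finset.sum_congr rfl fun i _ => Finset.sum_congr rfl fun j _ => ?_
          rw [hprod i j]; ring
  rw [integral_congr_ae (Filter.Eventually.of_forall hpt)]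
  have hint : ∀ i j : Fin n,
      Integrable (fun Y : Fin n → ℂ => (b i * c j) * ∏ k : Fin n, fac n i j k (Y k)) :=
    fun i j =>
      (Integrable.fintype_prod (f := fun k => fac n i j k) (fun k => int_fac n i j k)).const_mul _
  rw [integral_finset_sum _ (fun i _ => integrable_finset_sum _ (fun j _ => hint i j))]
  have hinner : ∀ i : Fin n,
      (∫ Y : Fin n → ℂ, ∑ j : Fin n, (b i * c j) * ∏ k : Fin n, fac n i j k (Y k))
      = ∑ j : Fin n, (b i * c j) * (if i = j then 1/(Real.pi:ℂ) else 0) := by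
    intro i
    rw [integral_finset_sum _ (fun j _ => hint i j)]
    refine Finset.sum_congr rfl fun j _ => ?_
    rw [integral_const_mul, integral_fintype_prod_volume_eq_prod (fun k => fac n i j k),
      prod_int_fac]
  rw [Finset.sum_congr rfl (fun i _ => hinner i)]
  simp only [mul_ite, mul_zero, Finset.sum_ite_eq, Finset.mem_univ, if_true]
  rw [Finset.mul_sum]
  exact Finset.sum_congr rfl fun i _ => by ring
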